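/- arXiv:2211.15349 — 2 statements merged into one kernel-verified Lean document; each statement's English description precedes it below -/
import Mathlib

section
/- For any resource levels ℓ, ℓ' ∈ {0,...,cap}, state s, and action a: resup(ℓ, s, a) ≥ ℓ' if and only if ℓ ≥ resupinv(ℓ', s, a) (with the convention that ⊥ < n < ∞ for every integer n, and resup(ℓ,s,a) = ⊥ counts as < ℓ'). -/
/- Resource update function `resup` and its inverse `resupinv` for consumption
models with capacity `cap`, consumption `γ` and reload states `R`.
Resource levels live in `{0,…,cap}` extended with a bottom element `⊥`
(`WithBot ℕ`); the inverse takes values in `ℕ∞ = ℕ ∪ {∞}`. -/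

open Classical
attribute [local instance] Classical.propDecidable

noncomputable section

variable {S A : Type*}

/-- The resource update function: from level `ℓ` in state `s` playing `a`,
the new level is `ℓ - γ s a` (or `cap - γ s a` in a reload state), and `⊥`
if the resource would be exhausted. -/
def resup (cap : ℕ) (γ : S → A → ℕ) (R : Set S) (ℓ : ℕ) (s : S) (a : A) : WithBot ℕ :=
  if s ∈ R then (if γ s a ≤ cap then ((cap - γ s a : ℕ) : WithBot ℕ) else ⊥)
  else (if γ s a ≤ ℓ then ((ℓ - γ s a : ℕ) : WithBot ℕ) else ⊥)

/-- The inverse resource update function: the minimal amount of resource needed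
in `s` so that after playing `a` at least `ℓ'` units remain (`∞` if impossible). -/
def resupinv (cap : ℕ) (γ : S → A → ℕ) (R : Set S) (ℓ' : ℕ) (s : S) (a : A) : ℕ∞ :=
  if ℓ' + γ s a ≤ cap then (if s ∈ R then 0 else ((ℓ' + γ s a : ℕ) : ℕ∞)) else ⊤

/-- Galois-connection-style equivalence between `resup` and `resupinv`:
`resup (ℓ, s, a) ≥ ℓ'` iff `ℓ ≥ resupinv (ℓ', s, a)` (with `⊥ < n < ∞` for every
integer `n`; in particular `resup (ℓ,s,a) = ⊥` counts as `< ℓ'`). -/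
theorem resup_ge_iff_ge_resupinv (cap : ℕ) (γ : S → A → ℕ) (R : Set S)
    (ℓ ℓ' : ℕ) (hℓ : ℓ ≤ cap) (hℓ' : ℓ' ≤ cap) (s : S) (a : A) :
    ((ℓ' : WithBot ℕ) ≤ resup cap γ R ℓ s a) ↔ (resupinv cap γ R ℓ' s a ≤ (ℓ : ℕ∞)) := by
  unfold resup resupinv
  by_cases hR : s ∈ R <;> simp [hR]
  · by_cases h1 : γ s a ≤ cap <;> by_cases h2 : ℓ' + γ s a ≤ cap <;>
      simp [h1, h2, ← Nat.cast_add, Nat.cast_le, Nat.cast_lt, WithBot.coe_le_coe] <;> omega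
  · by_cases h1 : γ s a ≤ ℓ <;> by_cases h2 : ℓ' + γ s a ≤ cap <;>
      simp [h1, h2, ← Nat.cast_add, Nat.cast_le, Nat.cast_lt, WithBot.coe_le_coe] <;> omega
end
end

section
/- Any CoPOMDP can be transformed in linear time into a consistent CoPOMDP by inserting, for every state-action pair (s,a), a fresh intermediate state t_{s,a} that deterministically receives the transition from s under a, emits the consumption value γ(s,a) as its observation, and whose every outgoing action has distribution δ(s,a) and consumption γ(s,a); the resulting CoPOMDP is consistent. -/
/- The consistency-enforcing transformation of a CoPOMDP. For every pair
`(s,a)` a fresh intermediate state `t_{s,a}` is inserted: `δ'(s,a)` is the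
Dirac distribution on `t_{s,a}`, the state `t_{s,a}` deterministically emits
the consumption value `γ(s,a)` as its observation (the new observation set is
the disjoint union `Ω ⊕ ℕ`), every action from `t_{s,a}` has distribution
`δ(s,a)` and consumption `γ(s,a)`, and original states have consumption `0`.
The resulting CoPOMDP is consistent: lookalike states have equal consumption
under every action. -/

open Classical
attribute [local instance] Classical.propDecidable

noncomputable section

variable {S A Ω : Type*}

/-- A CoPOMDP: probabilistic transitions `δ`, probabilistic observations `obs`,
consumption `γ`, reload states `R` and capacity `cap`. -/
structure CoPOMDP (S A Ω : Type*) where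
  δ : S → A → S → ℝ
  obs : S → Ω → ℝ
  γ : S → A → ℕ
  R : Set S
  cap : ℕ

/-- States of the transformed CoPOMDP: original states plus a fresh state
`t_{s,a}` for every state-action pair. -/
abbrev TrState (S A : Type*) := S ⊕ (S × A)

/-- Transitions of the transformed CoPOMDP: `δ'(s,a) = Dirac(t_{s,a})` and
`δ'(t_{s,a}, b) = δ(s,a)` for every action `b`. -/
def trδ (M : CoPOMDP S A Ω) : TrState S A → A → TrState S A → ℝ
  | Sum.inl s, a, Sum.inr p => if p = (s, a) then 1 else 0
  | Sum.inl _, _, Sum.inl _ => 0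
  | Sum.inr (s, a), _, Sum.inl t => M.δ s a t
  | Sum.inr _, _, Sum.inr _ => 0

/-- Observations of the transformed CoPOMDP (over `Ω ⊕ ℕ`): original states
keep their observations, and `t_{s,a}` emits the consumption value `γ(s,a)`. -/
def trObs (M : CoPOMDP S A Ω) : TrState S A → Ω ⊕ ℕ → ℝ
  | Sum.inl s, Sum.inl o => M.obs s o
  | Sum.inl _, Sum.inr _ => 0
  | Sum.inr (s, a), Sum.inr n => if n = M.γ s a then 1 else 0
  | Sum.inr _, Sum.inl _ => 0

/-- Consumption of the transformed CoPOMDP: original states consume `0`, and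
`t_{s,a}` consumes `γ(s,a)` under every action. -/
def trγ (M : CoPOMDP S A Ω) : TrState S A → A → ℕ
  | Sum.inl _, _ => 0
  | Sum.inr (s, a), _ => M.γ s a

/-- the transformed CoPOMDP is consistent: any two lookalike
states (states that can emit a common observation with positive probability)
have equal consumption under every action. -/
theorem transformed_consistent (M : CoPOMDP S A Ω) :
    ∀ p q : TrState S A, (∃ o, 0 < trObs M p o ∧ 0 < trObs M q o) →
      ∀ b, trγ M p b = trγ M q b := by
  rintro (s | ⟨s, a⟩) (t | ⟨t, c⟩) ⟨o, hp, hq⟩ b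
  · rfl
  · rcases o with o | n
    · simp [trObs] at hq
    · simp [trObs] at hp
  · rcases o with o | n
    · simp [trObs] at hp
    · simp [trObs] at hq
  · rcases o with o | n
    · simp [trObs] at hp
    · simp only [trObs] at hp hq
      split_ifs at hp hq with h1 h2
      · simp [trγ, h1 ▸ h2]
      all_goals linarith
end
end
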